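/- Let τ ≥ 1 be an integer and let N = ⟨6, 1+6τ, 2+6τ, 3+6τ, 4+6τ⟩. Then N is a numerical semigroup of genus g = 6τ whose largest gap is 12τ−1 = 2g−1; in particular N is symmetric. Moreover {6, 1+6τ, 2+6τ, 3+6τ, 4+6τ} is a minimal system of generators of N, i.e. no proper subset of it generates N. -/

import Mathlib

private def Pg (τ n : ℕ) : Prop :=
  n % 6 = 0 ∨ (1 ≤ n % 6 ∧ n % 6 ≤ 4 ∧ 6 * τ + n % 6 ≤ n) ∨ (n % 6 = 5 ∧ 12 * τ + 5 ≤ n)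

private lemma not_mem_of_invariant {S : Set ℕ} {Q : ℕ → Prop} (h0 : Q 0)
    (hadd : ∀ a b, Q a → Q b → Q (a + b)) (hS : ∀ s ∈ S, Q s) {x : ℕ} (hx : ¬ Q x) :
    x ∉ AddSubmonoid.closure S := fun h =>
  hx (AddSubmonoid.closure_induction (motive := fun n _ => Q n) (fun s hs => hS s hs) h0
    (fun a b _ _ ha hb => hadd a b ha hb) h)

private lemma mem_closure_iff_Pg (τ n : ℕ) :
    n ∈ AddSubmonoid.closure ({6, 1 + 6 * τ, 2 + 6 * τ, 3 + 6 * τ, 4 + 6 * τ} : Set ℕ)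
      ↔ Pg τ n := by
  constructor
  · intro h
    induction h using AddSubmonoid.closure_induction with
    | mem x hx =>
      rcases hx with rfl | rfl | rfl | rfl | rfl <;> unfold Pg <;> omega
    | zero => unfold Pg; omega
    | add a b _ _ ha hb => unfold Pg at *; omega
  · intro h
    have h6 : (6 : ℕ) ∈ AddSubmonoid.closure
        ({6, 1 + 6 * τ, 2 + 6 * τ, 3 + 6 * τ, 4 + 6 * τ} : Set ℕ) :=
      AddSubmonoid.subset_closure (by simp)
    have hmul : ∀ k : ℕ, 6 * k ∈ AddSubmonoid.closure
        ({6, 1 + 6 * τ, 2 + 6 * τ, 3 + 6 * τ, 4 + 6 * τ} : Set ℕ) := by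
      intro k
      have := AddSubmonoid.nsmul_mem _ h6 k
      rwa [smul_eq_mul, Nat.mul_comm k 6] at this
    have hgen : ∀ r : ℕ, 1 ≤ r → r ≤ 4 → (r + 6 * τ) ∈ AddSubmonoid.closure
        ({6, 1 + 6 * τ, 2 + 6 * τ, 3 + 6 * τ, 4 + 6 * τ} : Set ℕ) := by
      intro r h1 h4
      apply AddSubmonoid.subset_closure
      interval_cases r <;> simp
    rcases h with h0 | ⟨h1, h4, hle⟩ | ⟨h5, hle⟩
    · obtain ⟨k, rfl⟩ : ∃ k, n = 6 * k := ⟨n / 6, by omega⟩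
      exact hmul k
    · obtain ⟨k, hk⟩ : ∃ k, n = (n % 6 + 6 * τ) + 6 * k :=
        ⟨(n - (n % 6 + 6 * τ)) / 6, by omega⟩
      rw [hk]
      exact AddSubmonoid.add_mem _ (hgen _ h1 h4) (hmul k)
    · obtain ⟨k, hk⟩ : ∃ k, n = (1 + 6 * τ) + ((4 + 6 * τ) + 6 * k) :=
        ⟨(n - (12 * τ + 5)) / 6, by omega⟩
      rw [hk]
      exact AddSubmonoid.add_mem _ (hgen 1 (by norm_num) (by norm_num))
        (AddSubmonoid.add_mem _ (hgen 4 (by norm_num) (by norm_num)) (hmul k))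

private lemma gen_not_mem (τ r : ℕ) (hτ : 1 ≤ τ) (h1 : 1 ≤ r) (h4 : r ≤ 4) :
    (r + 6 * τ) ∉ AddSubmonoid.closure
      (({6, 1 + 6 * τ, 2 + 6 * τ, 3 + 6 * τ, 4 + 6 * τ} : Set ℕ) \ {r + 6 * τ}) := by
  apply not_mem_of_invariant
    (Q := fun n => n % 6 = 0 ∨ (n % 6 ≠ r ∧ 6 * τ + 1 ≤ n) ∨ 12 * τ + 2 ≤ n)
  · omega
  · intro a b ha hb; omega
  · rintro s ⟨hsS, hsne⟩
    simp only [Set.mem_singleton_iff] at hsne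
    rcases hsS with rfl | rfl | rfl | rfl | rfl <;> omega
  · omega

theorem family_two_symmetric_minimal (τ : ℕ) (hτ : 1 ≤ τ) :
    ((AddSubmonoid.closure ({6, 1 + 6 * τ, 2 + 6 * τ, 3 + 6 * τ, 4 + 6 * τ} : Set ℕ)
        : Set ℕ))ᶜ.Finite ∧
    ((AddSubmonoid.closure ({6, 1 + 6 * τ, 2 + 6 * τ, 3 + 6 * τ, 4 + 6 * τ} : Set ℕ)
        : Set ℕ))ᶜ.ncard = 6 * τ ∧
    (12 * τ - 1) ∉
      AddSubmonoid.closure ({6, 1 + 6 * τ, 2 + 6 * τ, 3 + 6 * τ, 4 + 6 * τ} : Set ℕ) ∧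
    12 * τ - 1 = 2 * (6 * τ) - 1 ∧
    (∀ ℓ : ℕ, ℓ ∉
        AddSubmonoid.closure ({6, 1 + 6 * τ, 2 + 6 * τ, 3 + 6 * τ, 4 + 6 * τ} : Set ℕ) →
      ℓ ≤ 12 * τ - 1) ∧
    (∀ x ∈ ({6, 1 + 6 * τ, 2 + 6 * τ, 3 + 6 * τ, 4 + 6 * τ} : Set ℕ),
      x ∉ AddSubmonoid.closure
        (({6, 1 + 6 * τ, 2 + 6 * τ, 3 + 6 * τ, 4 + 6 * τ} : Set ℕ) \ {x})) := by
  set f : ℕ → ℕ := fun i => if i < 4 * τ then 6 * (i / 4) + (i % 4 + 1) else 6 * (i - 4 * τ) + 5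
    with hf
  have hcompl : ((AddSubmonoid.closure
      ({6, 1 + 6 * τ, 2 + 6 * τ, 3 + 6 * τ, 4 + 6 * τ} : Set ℕ) : Set ℕ))ᶜ
      = ↑((Finset.range (6 * τ)).image f) := by
    ext n
    simp only [Set.mem_compl_iff, SetLike.mem_coe, mem_closure_iff_Pg, Finset.coe_image,
      Finset.coe_range, Set.mem_image, Set.mem_Iio]
    constructor
    · intro hn
      unfold Pg at hn
      push_neg at hn
      by_cases h5 : n % 6 = 5
      · refine ⟨4 * τ + n / 6, by omega, ?_⟩
        simp only [hf]
        rw [if_neg (by omega)]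
        omega
      · refine ⟨4 * (n / 6) + (n % 6 - 1), by omega, ?_⟩
        simp only [hf]
        rw [if_pos (by omega)]
        omega
    · rintro ⟨i, hi, rfl⟩
      unfold Pg
      simp only [hf]
      split_ifs with h <;> omega
  have hfin : ((AddSubmonoid.closure
      ({6, 1 + 6 * τ, 2 + 6 * τ, 3 + 6 * τ, 4 + 6 * τ} : Set ℕ) : Set ℕ))ᶜ.Finite := by
    rw [hcompl]; exact (Finset.range (6 * τ)).image f |>.finite_toSet
  refine ⟨hfin, ?_, ?_, by omega, ?_, ?_⟩
  · rw [hcompl, Set.ncard_coe_finset]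
    rw [Finset.card_image_of_injOn, Finset.card_range]
    intro i hi j hj hij
    simp only [hf] at hij
    split_ifs at hij <;> omega
  · rw [mem_closure_iff_Pg]; unfold Pg; omega
  · intro ℓ hℓ
    rw [mem_closure_iff_Pg] at hℓ
    unfold Pg at hℓ
    omega
  · intro x hx
    rcases hx with rfl | rfl | rfl | rfl | rfl
    · apply not_mem_of_invariant (Q := fun n => n = 0 ∨ 6 * τ + 1 ≤ n)
      · omega
      · intro a b ha hb; omega
      · rintro s ⟨hsS, hsne⟩
        simp only [Set.mem_singleton_iff] at hsne
        rcases hsS with rfl | rfl | rfl | rfl | rfl <;> omega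
      · omega
    · exact gen_not_mem τ 1 hτ (by norm_num) (by norm_num)
    · exact gen_not_mem τ 2 hτ (by norm_num) (by norm_num)
    · exact gen_not_mem τ 3 hτ (by norm_num) (by norm_num)
    · exact gen_not_mem τ 4 hτ (by norm_num) (by norm_num)
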